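/- If a point p ∈ P²(ℂ) lies on none of the nine lines l_{1i}: x1 = ρ^i x0, l_{2i}: x2 = ρ^i x1, l_{3i}: x0 = ρ^i x2 (i = 0,1,2) and is not one of the nine points y_{1i} = (1:−ρ^i:0), y_{2i} = (0:1:−ρ^i), y_{3i} = (−ρ^i:0:1) (i = 0,1,2), then the G-orbit of p has exactly 18 elements. -/

import Mathlib

open Matrix Complex
open scoped LinearAlgebra.Projectivization

noncomputable section

/-- `ρ = exp(2πi/3)`, a primitive cube root of unity. -/
def ρ : ℂ := Complex.exp (2 * Real.pi * Complex.I / 3)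

lemma ρ_ne_zero : ρ ≠ 0 := Complex.exp_ne_zero _

/-- The polynomial `G_λ` as a function of `(y0, y1, y2)`. -/
def Gpoly (lam : ℂ) (y : Fin 3 → ℂ) : ℂ :=
  ((y 0) ^ 6 + (y 1) ^ 6 + (y 2) ^ 6)
    + 2 * (2 * lam ^ 3 - 1) * ((y 0) ^ 3 * (y 1) ^ 3 + (y 0) ^ 3 * (y 2) ^ 3
        + (y 1) ^ 3 * (y 2) ^ 3)
    - 6 * lam ^ 2 * (y 0) * (y 1) * (y 2) * ((y 0) ^ 3 + (y 1) ^ 3 + (y 2) ^ 3)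
    - 3 * lam * (lam ^ 3 - 4) * (y 0) ^ 2 * (y 1) ^ 2 * (y 2) ^ 2

/-- The substitution `y = y(x)`. -/
def subst (lam : ℂ) (x : Fin 3 → ℂ) : Fin 3 → ℂ :=
  ![3 * (x 0) ^ 2 - 3 * lam * (x 1) * (x 2),
    3 * (x 1) ^ 2 - 3 * lam * (x 0) * (x 2),
    3 * (x 2) ^ 2 - 3 * lam * (x 0) * (x 1)]

/-- The (evaluation of the) homogeneous polynomial `F_λ` of degree 12 in `(x0, x1, x2)`. -/
def Fpoly (lam : ℂ) (x : Fin 3 → ℂ) : ℂ := Gpoly lam (subst lam x)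

/-- The matrix `σ`. -/
def σmat : Matrix (Fin 3) (Fin 3) ℂ := !![0, 1, 0; 0, 0, 1; 1, 0, 0]

/-- The matrix `τ`. -/
def τmat : Matrix (Fin 3) (Fin 3) ℂ := !![1, 0, 0; 0, ρ, 0; 0, 0, ρ ^ 2]

/-- The matrix `ι`. -/
def ιmat : Matrix (Fin 3) (Fin 3) ℂ := !![1, 0, 0; 0, 0, 1; 0, 1, 0]

lemma σmat_det : σmat.det ≠ 0 := by
  simp [σmat, Matrix.det_fin_three]

lemma τmat_det : τmat.det ≠ 0 := by
  simpa [τmat, Matrix.det_fin_three, pow_succ] using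
    mul_ne_zero ρ_ne_zero (mul_ne_zero ρ_ne_zero ρ_ne_zero)

lemma ιmat_det : ιmat.det ≠ 0 := by
  simp [ιmat, Matrix.det_fin_three]

/-- `σ` as element of `GL₃(ℂ)`. -/
def σgl : GL (Fin 3) ℂ := Matrix.GeneralLinearGroup.mkOfDetNeZero σmat σmat_det

/-- `τ` as element of `GL₃(ℂ)`. -/
def τgl : GL (Fin 3) ℂ := Matrix.GeneralLinearGroup.mkOfDetNeZero τmat τmat_det

/-- `ι` as element of `GL₃(ℂ)`. -/
def ιgl : GL (Fin 3) ℂ := Matrix.GeneralLinearGroup.mkOfDetNeZero ιmat ιmat_det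

/-- The subgroup `G` of `GL₃(ℂ)` generated by `σ, τ, ι`. -/
def Hgrp : Subgroup (GL (Fin 3) ℂ) := Subgroup.closure {σgl, τgl, ιgl}

lemma mulVec_injective (M : GL (Fin 3) ℂ) :
    Function.Injective (M : Matrix (Fin 3) (Fin 3) ℂ).mulVecLin := by
  intro v w h
  have h' : (M : Matrix (Fin 3) (Fin 3) ℂ) *ᵥ v = (M : Matrix (Fin 3) (Fin 3) ℂ) *ᵥ w := h
  have h2 : ((M⁻¹ * M : GL (Fin 3) ℂ) : Matrix (Fin 3) (Fin 3) ℂ) *ᵥ v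
      = ((M⁻¹ * M : GL (Fin 3) ℂ) : Matrix (Fin 3) (Fin 3) ℂ) *ᵥ w := by
    simp only [Units.val_mul, ← Matrix.mulVec_mulVec]
    exact congrArg _ h'
  simpa using h2

/-- The action of `GL₃(ℂ)` on `ℙ²(ℂ)` given by `(M, [v]) ↦ [Mv]`. -/
def act (M : GL (Fin 3) ℂ) (p : ℙ ℂ (Fin 3 → ℂ)) : ℙ ℂ (Fin 3 → ℂ) :=
  Projectivization.map (M : Matrix (Fin 3) (Fin 3) ℂ).mulVecLin (mulVec_injective M) p

/-- The orbit of a point of `ℙ²(ℂ)` under the subgroup `G` generated by `σ, τ, ι`. -/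
def Horbit (p : ℙ ℂ (Fin 3 → ℂ)) : Set (ℙ ℂ (Fin 3 → ℂ)) :=
  {q | ∃ M ∈ Hgrp, act M p = q}

lemma vec_ne_zero {v : Fin 3 → ℂ} (i : Fin 3) (h : v i ≠ 0) : v ≠ 0 :=
  fun hv => h (by simp [hv])

/-- The point of `ℙ²(ℂ)` with homogeneous coordinates `(a : b : c)`, where the `i`-th
coordinate is nonzero. -/
def pt (a b c : ℂ) (i : Fin 3) (h : ![a, b, c] i ≠ 0) : ℙ ℂ (Fin 3 → ℂ) :=
  Projectivization.mk ℂ ![a, b, c] (vec_ne_zero i h)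

/-- The line `l_{1i} : x1 = ρ^i x0` in `ℙ²(ℂ)`. -/
def line₁ (i : Fin 3) : Set (ℙ ℂ (Fin 3 → ℂ)) :=
  {p | ∃ v : Fin 3 → ℂ, ∃ hv : v ≠ 0, Projectivization.mk ℂ v hv = p ∧
    v 1 = ρ ^ (i : ℕ) * v 0}

/-- The line `l_{2i} : x2 = ρ^i x1` in `ℙ²(ℂ)`. -/
def line₂ (i : Fin 3) : Set (ℙ ℂ (Fin 3 → ℂ)) :=
  {p | ∃ v : Fin 3 → ℂ, ∃ hv : v ≠ 0, Projectivization.mk ℂ v hv = p ∧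
    v 2 = ρ ^ (i : ℕ) * v 1}

/-- The line `l_{3i} : x0 = ρ^i x2` in `ℙ²(ℂ)`. -/
def line₃ (i : Fin 3) : Set (ℙ ℂ (Fin 3 → ℂ)) :=
  {p | ∃ v : Fin 3 → ℂ, ∃ hv : v ≠ 0, Projectivization.mk ℂ v hv = p ∧
    v 0 = ρ ^ (i : ℕ) * v 2}

/-- The nine lines, as a set of subsets of `ℙ²(ℂ)`. -/
def nineLines : Set (Set (ℙ ℂ (Fin 3 → ℂ))) :=
  {l | ∃ i : Fin 3, l = line₁ i ∨ l = line₂ i ∨ l = line₃ i}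

/-- The point `y_{1i} = (1 : -ρ^i : 0)`. -/
def ypt₁ (i : Fin 3) : ℙ ℂ (Fin 3 → ℂ) := pt 1 (-ρ ^ (i : ℕ)) 0 0 (by simp)

/-- The point `y_{2i} = (0 : 1 : -ρ^i)`. -/
def ypt₂ (i : Fin 3) : ℙ ℂ (Fin 3 → ℂ) := pt 0 1 (-ρ ^ (i : ℕ)) 1 (by simp)

/-- The point `y_{3i} = (-ρ^i : 0 : 1)`. -/
def ypt₃ (i : Fin 3) : ℙ ℂ (Fin 3 → ℂ) := pt (-ρ ^ (i : ℕ)) 0 1 2 (by simp)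

/-- The nine points `y_{ji}`, as a set. -/
def ninePoints : Set (ℙ ℂ (Fin 3 → ℂ)) :=
  {p | ∃ i : Fin 3, p = ypt₁ i ∨ p = ypt₂ i ∨ p = ypt₃ i}

/-- The twelve intersection points of the nine lines. -/
def twelvePoints : Set (ℙ ℂ (Fin 3 → ℂ)) :=
  {pt 1 0 0 0 (by simp), pt 0 1 0 1 (by simp), pt 0 0 1 2 (by simp),
   pt 1 1 1 0 (by simp), pt 1 ρ (ρ ^ 2) 0 (by simp), pt 1 (ρ ^ 2) ρ 0 (by simp),
   pt 1 1 ρ 0 (by simp), pt 1 ρ 1 0 (by simp), pt ρ 1 1 1 (by simp),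
   pt 1 1 (ρ ^ 2) 0 (by simp), pt 1 (ρ ^ 2) 1 0 (by simp), pt (ρ ^ 2) 1 1 1 (by simp)}

/-- The orbit `O(1:0:0)`. -/
def orb₁ : Set (ℙ ℂ (Fin 3 → ℂ)) :=
  {pt 1 0 0 0 (by simp), pt 0 1 0 1 (by simp), pt 0 0 1 2 (by simp)}

/-- The orbit `O(1:1:1)`. -/
def orb₂ : Set (ℙ ℂ (Fin 3 → ℂ)) :=
  {pt 1 1 1 0 (by simp), pt 1 ρ (ρ ^ 2) 0 (by simp), pt 1 (ρ ^ 2) ρ 0 (by simp)}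

/-- The orbit `O(1:1:ρ)`. -/
def orb₃ : Set (ℙ ℂ (Fin 3 → ℂ)) :=
  {pt 1 1 ρ 0 (by simp), pt 1 ρ 1 0 (by simp), pt ρ 1 1 1 (by simp)}

/-- The orbit `O(1:1:ρ²)`. -/
def orb₄ : Set (ℙ ℂ (Fin 3 → ℂ)) :=
  {pt 1 1 (ρ ^ 2) 0 (by simp), pt 1 (ρ ^ 2) 1 0 (by simp), pt (ρ ^ 2) 1 1 1 (by simp)}


-- ρ facts
lemma hρ3 : ρ ^ 3 = 1 := by
  rw [ρ, ← Complex.exp_nat_mul]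
  rw [show ((3:ℕ):ℂ) * (2 * Real.pi * Complex.I / 3) = 2 * Real.pi * Complex.I by
    push_cast; ring]
  exact Complex.exp_two_pi_mul_I

lemma hρ1 : ρ ≠ 1 := by
  intro h
  rw [ρ, Complex.exp_eq_one_iff] at h
  obtain ⟨n, hn⟩ := h
  have hne : (2 * Real.pi * Complex.I : ℂ) ≠ 0 := by
    simp [Real.pi_ne_zero, Complex.I_ne_zero, Complex.ofReal_ne_zero]
  have h2 : ((n * 3 - 1 : ℂ)) * (2 * Real.pi * Complex.I) = 0 := by
    linear_combination -3 * hn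
  rcases mul_eq_zero.1 h2 with h3 | h3
  · have h4 : ((n * 3 - 1 : ℤ) : ℂ) = 0 := by push_cast; linear_combination h3
    have h5 : (n * 3 - 1 : ℤ) = 0 := by exact_mod_cast h4
    omega
  · exact hne h3

lemma hρsum : ρ ^ 2 + ρ + 1 = 0 := by
  have h := hρ3
  have : (ρ - 1) * (ρ ^ 2 + ρ + 1) = 0 := by linear_combination h
  rcases mul_eq_zero.1 this with h2 | h2
  · exact absurd (by linear_combination h2) hρ1
  · exact h2

lemma hρ2ne1 : ρ ^ 2 ≠ 1 := by
  intro h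
  have : ρ = 1 := by linear_combination hρ3 - ρ * h
  exact hρ1 this

-- cube roots
lemma cube_eq {a b : ℂ} (h : a ^ 3 = b ^ 3) : ∃ i : Fin 3, a = ρ ^ (i : ℕ) * b := by
  have key : (a - b) * (a - ρ * b) * (a - ρ ^ 2 * b) = 0 := by
    linear_combination h - a ^ 2 * b * hρsum + (a * b ^ 2) * hρsum + (a * b ^ 2 - b ^ 3) * hρ3
  rcases mul_eq_zero.1 key with h1 | h1
  · rcases mul_eq_zero.1 h1 with h2 | h2
    · refine ⟨0, ?_⟩
      simp only [Fin.val_zero, pow_zero]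
      linear_combination h2
    · refine ⟨1, ?_⟩
      simp only [Fin.val_one, pow_one]
      linear_combination h2
  · refine ⟨2, ?_⟩
    simp only [Fin.val_two]
    linear_combination h1
-- act machinery
lemma act_mk (M : GL (Fin 3) ℂ) (v : Fin 3 → ℂ) (hv : v ≠ 0) :
    act M (Projectivization.mk ℂ v hv) =
      Projectivization.mk ℂ ((M : Matrix (Fin 3) (Fin 3) ℂ) *ᵥ v)
        (by simpa using (mulVec_injective M).ne_iff' (map_zero _) |>.2 hv) := by
  rw [act, Projectivization.map_mk]
  rfl

lemma act_mul (M N : GL (Fin 3) ℂ) (x : ℙ ℂ (Fin 3 → ℂ)) :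
    act (M * N) x = act M (act N x) := by
  induction x using Projectivization.ind with
  | h v hv =>
    rw [act_mk, act_mk, act_mk]
    have : ((M * N : GL (Fin 3) ℂ) : Matrix (Fin 3) (Fin 3) ℂ) *ᵥ v
        = (M : Matrix (Fin 3) (Fin 3) ℂ) *ᵥ ((N : Matrix (Fin 3) (Fin 3) ℂ) *ᵥ v) := by
      simp [Units.val_mul, Matrix.mulVec_mulVec]
    congr 1

lemma act_one (x : ℙ ℂ (Fin 3 → ℂ)) : act 1 x = x := by
  induction x using Projectivization.ind with
  | h v hv =>
    rw [act_mk]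
    congr 1
    simp

lemma mk_smul_eq (v : Fin 3 → ℂ) (hv : v ≠ 0) (s : ℂ) (hs : s ≠ 0)
    (w : Fin 3 → ℂ) (hw : w ≠ 0) (h : w = s • v) :
    Projectivization.mk ℂ w hw = Projectivization.mk ℂ v hv := by
  rw [Projectivization.mk_eq_mk_iff]
  exact ⟨Units.mk0 s hs, h.symm⟩

lemma act_eq_of_smul (M N : GL (Fin 3) ℂ) (s : ℂ) (hs : s ≠ 0)
    (h : (M : Matrix (Fin 3) (Fin 3) ℂ) = s • (N : Matrix (Fin 3) (Fin 3) ℂ))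
    (x : ℙ ℂ (Fin 3 → ℂ)) : act M x = act N x := by
  induction x using Projectivization.ind with
  | h v hv =>
    rw [act_mk, act_mk]
    apply mk_smul_eq _ _ s hs
    rw [h, Matrix.smul_mulVec]

-- coercions
lemma σgl_val : (σgl : Matrix (Fin 3) (Fin 3) ℂ) = σmat := rfl
lemma τgl_val : (τgl : Matrix (Fin 3) (Fin 3) ℂ) = τmat := rfl
lemma ιgl_val : (ιgl : Matrix (Fin 3) (Fin 3) ℂ) = ιmat := rfl

-- mulVec lemmas
lemma σ_mulVec (w : Fin 3 → ℂ) : σmat *ᵥ w = ![w 1, w 2, w 0] := by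
  funext i
  fin_cases i <;> simp [σmat, Matrix.mulVec, dotProduct, Fin.sum_univ_three]

lemma τ_mulVec (w : Fin 3 → ℂ) : τmat *ᵥ w = ![w 0, ρ * w 1, ρ ^ 2 * w 2] := by
  funext i
  fin_cases i <;> simp [τmat, Matrix.mulVec, dotProduct, Fin.sum_univ_three]

lemma ι_mulVec (w : Fin 3 → ℂ) : ιmat *ᵥ w = ![w 0, w 2, w 1] := by
  funext i
  fin_cases i <;> simp [ιmat, Matrix.mulVec, dotProduct, Fin.sum_univ_three]

-- matrix relations
lemma hρ4 : ρ ^ 4 = ρ := by linear_combination ρ * hρ3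
lemma hρ6 : ρ ^ 6 = 1 := by linear_combination (ρ ^ 3 + 1) * hρ3


lemma Rσ3 : σmat ^ 3 = 1 := by
  ext i j
  fin_cases i <;> fin_cases j <;>
    simp [σmat, pow_succ, Matrix.mul_apply, Fin.sum_univ_three, Matrix.one_apply, Matrix.vecHead, Matrix.vecTail]

lemma Rτ3 : τmat ^ 3 = 1 := by
  ext i j
  fin_cases i <;> fin_cases j <;>
    simp [τmat, pow_succ, Matrix.mul_apply, Fin.sum_univ_three, Matrix.one_apply, Matrix.vecHead, Matrix.vecTail] <;>
    first | rfl | linear_combination hρ3 | linear_combination -hρ3 | linear_combination hρ4 | linear_combination -hρ4 | linear_combination hρ6 | linear_combination -hρ6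

lemma Rι2 : ιmat ^ 2 = 1 := by
  ext i j
  fin_cases i <;> fin_cases j <;>
    simp [ιmat, pow_succ, Matrix.mul_apply, Fin.sum_univ_three, Matrix.one_apply, Matrix.vecHead, Matrix.vecTail]

lemma Rτσ : τmat * σmat = ρ ^ 2 • (σmat * τmat) := by
  ext i j
  fin_cases i <;> fin_cases j <;>
    simp [σmat, τmat, Matrix.mul_apply, Fin.sum_univ_three, Matrix.smul_apply, smul_eq_mul, Matrix.vecHead, Matrix.vecTail] <;>
    first | rfl | linear_combination hρ3 | linear_combination -hρ3 | linear_combination hρ4 | linear_combination -hρ4 | linear_combination hρ6 | linear_combination -hρ6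

lemma Rισ : ιmat * σmat = σmat ^ 2 * ιmat := by
  ext i j
  fin_cases i <;> fin_cases j <;>
    simp [σmat, ιmat, pow_succ, Matrix.mul_apply, Fin.sum_univ_three, Matrix.one_apply, Matrix.vecHead, Matrix.vecTail]

lemma Rιτ : ιmat * τmat = τmat ^ 2 * ιmat := by
  ext i j
  fin_cases i <;> fin_cases j <;>
    simp [τmat, ιmat, pow_succ, Matrix.mul_apply, Fin.sum_univ_three, Matrix.one_apply, Matrix.vecHead, Matrix.vecTail] <;>
    first | rfl | linear_combination hρ3 | linear_combination -hρ3 | linear_combination hρ4 | linear_combination -hρ4 | linear_combination hρ6 | linear_combination -hρ6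
/-- word σ^b τ^c ι^d in GL -/
def glw (b c d : ℕ) : GL (Fin 3) ℂ := σgl ^ b * τgl ^ c * ιgl ^ d

lemma glw_val (b c d : ℕ) :
    ((glw b c d : GL (Fin 3) ℂ) : Matrix (Fin 3) (Fin 3) ℂ)
      = σmat ^ b * τmat ^ c * ιmat ^ d := by
  simp [glw, Units.val_mul, σgl_val, τgl_val, ιgl_val]

lemma σgl3 : σgl ^ 3 = 1 := by
  ext : 1
  simpa [Units.val_pow_eq_pow_val, σgl_val] using Rσ3

lemma τgl3 : τgl ^ 3 = 1 := by
  ext : 1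
  simpa [Units.val_pow_eq_pow_val, τgl_val] using Rτ3

lemma ιgl2 : ιgl ^ 2 = 1 := by
  ext : 1
  simpa [Units.val_pow_eq_pow_val, ιgl_val] using Rι2

lemma pow_mod_gen {G : Type*} [Group G] (g : G) (k : ℕ) (hk : g ^ k = 1) (b : ℕ) :
    g ^ b = g ^ (b % k) := by
  conv_lhs => rw [← Nat.div_add_mod b k]
  rw [pow_add, pow_mul, hk, one_pow, one_mul]

/-- the basic points of the orbit -/
def qv (v : Fin 3 → ℂ) (hv : v ≠ 0) (b c d : ℕ) : ℙ ℂ (Fin 3 → ℂ) :=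
  act (glw b c d) (Projectivization.mk ℂ v hv)

lemma qv_mod (v : Fin 3 → ℂ) (hv : v ≠ 0) (b c d : ℕ) :
    qv v hv b c d = qv v hv (b % 3) (c % 3) (d % 2) := by
  rw [qv, qv, glw, glw, pow_mod_gen σgl 3 σgl3, pow_mod_gen τgl 3 τgl3,
    pow_mod_gen ιgl 2 ιgl2]

lemma qv_zero (v : Fin 3 → ℂ) (hv : v ≠ 0) :
    qv v hv 0 0 0 = Projectivization.mk ℂ v hv := by
  rw [qv, glw]
  simp [act_one]

-- relations with symbolic exponents
lemma Rτσn (b : ℕ) : τmat * σmat ^ b = ρ ^ (2 * b) • (σmat ^ b * τmat) := by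
  induction b with
  | zero => simp
  | succ n ih =>
    rw [pow_succ, ← Matrix.mul_assoc, ih, Matrix.smul_mul, Matrix.mul_assoc,
      Rτσ, Matrix.mul_smul, smul_smul, ← Matrix.mul_assoc, ← pow_succ]
    rw [show 2 * (n + 1) = 2 * n + 2 by ring, pow_add]
    try rfl
    try rw [← pow_add]

lemma Rισn (b : ℕ) : ιmat * σmat ^ b = σmat ^ (2 * b) * ιmat := by
  induction b with
  | zero => simp
  | succ n ih =>
    rw [pow_succ, ← Matrix.mul_assoc, ih, Matrix.mul_assoc, Rισ,
      ← Matrix.mul_assoc, ← pow_add]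
    rw [show 2 * n + 2 = 2 * (n + 1) by ring]

lemma Rιτn (c : ℕ) : ιmat * τmat ^ c = τmat ^ (2 * c) * ιmat := by
  induction c with
  | zero => simp
  | succ n ih =>
    rw [pow_succ, ← Matrix.mul_assoc, ih, Matrix.mul_assoc, Rιτ,
      ← Matrix.mul_assoc, ← pow_add]
    rw [show 2 * n + 2 = 2 * (n + 1) by ring]

-- transition lemmas
lemma Lσ (v : Fin 3 → ℂ) (hv : v ≠ 0) (b c d : ℕ) :
    act σgl (qv v hv b c d) = qv v hv (b + 1) c d := by
  rw [qv, qv, ← act_mul]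
  congr 1
  rw [glw, glw, ← mul_assoc, ← mul_assoc, ← pow_succ']

lemma Lτ (v : Fin 3 → ℂ) (hv : v ≠ 0) (b c d : ℕ) :
    act τgl (qv v hv b c d) = qv v hv b (c + 1) d := by
  rw [qv, qv, ← act_mul]
  apply act_eq_of_smul _ _ (ρ ^ (2 * b)) (pow_ne_zero _ ρ_ne_zero)
  rw [Units.val_mul, τgl_val, glw_val, glw_val]
  rw [← Matrix.mul_assoc, ← Matrix.mul_assoc, Rτσn, Matrix.smul_mul, Matrix.smul_mul,
    Matrix.mul_assoc _ τmat (τmat ^ c), ← pow_succ']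

lemma Lι (v : Fin 3 → ℂ) (hv : v ≠ 0) (b c d : ℕ) :
    act ιgl (qv v hv b c d) = qv v hv (2 * b) (2 * c) (d + 1) := by
  rw [qv, qv, ← act_mul]
  congr 1
  ext : 1
  rw [Units.val_mul, ιgl_val, glw_val, glw_val]
  rw [← Matrix.mul_assoc, ← Matrix.mul_assoc, Rισn, Matrix.mul_assoc (σmat ^ (2*b)),
    Rιτn, ← Matrix.mul_assoc, Matrix.mul_assoc _ ιmat, ← pow_succ']

lemma Lσn (v : Fin 3 → ℂ) (hv : v ≠ 0) (n b c d : ℕ) :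
    act (σgl ^ n) (qv v hv b c d) = qv v hv (b + n) c d := by
  induction n with
  | zero => simp [act_one]
  | succ m ih => rw [pow_succ', act_mul, ih, Lσ, Nat.add_assoc]

lemma Lτn (v : Fin 3 → ℂ) (hv : v ≠ 0) (n b c d : ℕ) :
    act (τgl ^ n) (qv v hv b c d) = qv v hv b (c + n) d := by
  induction n with
  | zero => simp [act_one]
  | succ m ih => rw [pow_succ', act_mul, ih, Lτ, Nat.add_assoc]
section Algebra

lemma resolve {u w : ℂ} (h : u * w = 0) (hu : u ≠ 0) : w = 0 :=
  (mul_eq_zero.1 h).resolve_left hu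

variable {x y z a r : ℂ}

lemma A1 (ha : a ≠ 0) (hr3 : r ^ 3 = 1) (hr1 : r ≠ 1)
    (hxy : y ^ 3 ≠ x ^ 3) (hyz : z ^ 3 ≠ y ^ 3) (hzx : x ^ 3 ≠ z ^ 3)
    (e0 : x = a * x) (e1 : r * y = a * y) (e2 : r ^ 2 * z = a * z) : False := by
  have hr0 : r ≠ 0 := fun h => by simp [h] at hr3
  have hr2 : r ^ 2 ≠ 1 := fun h => hr1 (by linear_combination hr3 - r * h)
  by_cases hx : x = 0
  · have hy : y ≠ 0 := fun h => hxy (by rw [h, hx])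
    have hz : z ≠ 0 := fun h => hzx (by rw [hx, h])
    have h1 : r - a = 0 := resolve (by linear_combination e1 : y * (r - a) = 0) hy
    have h2 : r ^ 2 - a = 0 := resolve (by linear_combination e2 : z * (r ^ 2 - a) = 0) hz
    exact hr1 (resolve (by linear_combination h2 - h1 : r * (r - 1) = 0) hr0 |> sub_eq_zero.1)
  · have ha1 : a = 1 := by
      have h := resolve (by linear_combination e0 : x * (1 - a) = 0) hx
      linear_combination -h
    have hy : y = 0 := by
      by_contra hy
      exact hr1 (sub_eq_zero.1 (resolve
        (by linear_combination e1 + y * ha1 : y * (r - 1) = 0) hy))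
    have hz : z = 0 := by
      by_contra hz
      exact hr2 (sub_eq_zero.1 (resolve
        (by linear_combination e2 + z * ha1 : z * (r ^ 2 - 1) = 0) hz))
    exact hyz (by rw [hy, hz])

lemma A2 (ha : a ≠ 0) (hr3 : r ^ 3 = 1)
    (hxy : y ^ 3 ≠ x ^ 3) (hyz : z ^ 3 ≠ y ^ 3) (hzx : x ^ 3 ≠ z ^ 3)
    (e0 : r * y = a * x) (e1 : r ^ 2 * z = a * y) (e2 : x = a * z) : False := by
  have hr0 : r ≠ 0 := fun h => by simp [h] at hr3
  have hx : x ≠ 0 := by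
    intro hx
    have hy : y = 0 := resolve (by linear_combination e0 + a * hx : r * y = 0) hr0
    exact hxy (by rw [hx, hy])
  have hy : y ≠ 0 := by
    intro hy
    have hz : z = 0 := by
      have h2 : r ^ 2 ≠ 0 := pow_ne_zero _ hr0
      exact resolve (by linear_combination e1 + a * hy : r ^ 2 * z = 0) h2
    exact hyz (by rw [hz, hy])
  have hz : z ≠ 0 := by
    intro hz
    exact hzx (by rw [e2, hz]; ring)
  have key : x * y * z * (a ^ 3 - 1) = 0 := by
    linear_combination (-(r ^ 2 * z * x)) * e0 - (a * x * x) * e1 - (a * x * a * y) * e2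
      + (x * y * z) * hr3
  have ha3 : a ^ 3 - 1 = 0 :=
    resolve (u := x * y * z) (w := a ^ 3 - 1) key (mul_ne_zero (mul_ne_zero hx hy) hz)
  exact hxy (by
    linear_combination (r ^ 2 * y ^ 2 + r * y * a * x + a ^ 2 * x ^ 2) * e0 - y ^ 3 * hr3
      + x ^ 3 * ha3)

lemma A3 (ha : a ≠ 0) (hr3 : r ^ 3 = 1)
    (hxy : y ^ 3 ≠ x ^ 3) (hyz : z ^ 3 ≠ y ^ 3) (hzx : x ^ 3 ≠ z ^ 3)
    (e0 : r ^ 2 * z = a * x) (e1 : x = a * y) (e2 : r * y = a * z) : False := by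
  have hr0 : r ≠ 0 := fun h => by simp [h] at hr3
  have hx : x ≠ 0 := by
    intro hx
    have hz : z = 0 := by
      have h2 : r ^ 2 ≠ 0 := pow_ne_zero _ hr0
      exact resolve (by linear_combination e0 + a * hx : r ^ 2 * z = 0) h2
    exact hzx (by rw [hx, hz])
  have hy : y ≠ 0 := by
    intro hy
    exact hx (by rw [e1, hy]; ring)
  have hz : z ≠ 0 := by
    intro hz
    have hyy : y = 0 := resolve (by linear_combination e2 + a * hz : r * y = 0) hr0
    exact hyz (by rw [hz, hyy])
  have key : x * y * z * (a ^ 3 - 1) = 0 := by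
    linear_combination (-(x * r * y)) * e0 - (a * x * r * y) * e1 - (a * x * a * y) * e2
      + (x * y * z) * hr3
  have ha3 : a ^ 3 - 1 = 0 :=
    resolve (u := x * y * z) (w := a ^ 3 - 1) key (mul_ne_zero (mul_ne_zero hx hy) hz)
  exact hxy (by
    linear_combination (-(x ^ 2 + a * x * y + a ^ 2 * y ^ 2)) * e1 - y ^ 3 * ha3)

lemma A4 (ha : a ≠ 0) (hr3 : r ^ 3 = 1)
    (hxy : y ^ 3 ≠ x ^ 3) (hyz : z ^ 3 ≠ y ^ 3) (hzx : x ^ 3 ≠ z ^ 3)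
    (hP2 : x = 0 → z ^ 3 ≠ -y ^ 3)
    (e0 : x = a * x) (e1 : r * z = a * y) (e2 : r ^ 2 * y = a * z) : False := by
  have hr0 : r ≠ 0 := fun h => by simp [h] at hr3
  have hy : y ≠ 0 := by
    intro hy
    have hz : z = 0 := resolve (by linear_combination e1 + a * hy : r * z = 0) hr0
    exact hyz (by rw [hz, hy])
  have hz : z ≠ 0 := by
    intro hz
    have hyy : y = 0 := by
      have h2 : r ^ 2 ≠ 0 := pow_ne_zero _ hr0
      exact resolve (by linear_combination e2 + a * hz : r ^ 2 * y = 0) h2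
    exact hyz (by rw [hz, hyy])
  have ha2 : a ^ 2 - 1 = 0 := by
    have key : y * z * (a ^ 2 - 1) = 0 := by
      linear_combination (-(r ^ 2 * y)) * e1 - (a * y) * e2 + (y * z) * hr3
    exact resolve (u := y * z) (w := a ^ 2 - 1) key (mul_ne_zero hy hz)
  have hz3 : z ^ 3 = a * y ^ 3 := by
    linear_combination (r ^ 2 * z ^ 2 + r * z * a * y + a ^ 2 * y ^ 2) * e1 - z ^ 3 * hr3
      + y ^ 3 * a * ha2
  rcases mul_eq_zero.1 (show (a - 1) * (a + 1) = 0 by linear_combination ha2) with h | h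
  · exact hyz (by rw [hz3, sub_eq_zero.1 h, one_mul])
  · have hx : x = 0 := by
      have : x * (1 - a) = 0 := by linear_combination e0
      have h1a : (1 : ℂ) - a ≠ 0 := by
        intro hh
        have : a = 1 := by linear_combination -hh
        rw [this] at h; norm_num at h
      exact (mul_eq_zero.1 this).resolve_right h1a
    have haneg : a = -1 := by linear_combination h
    exact hP2 hx (by rw [hz3, haneg]; ring)

lemma A5 (ha : a ≠ 0) (hr3 : r ^ 3 = 1)
    (hxy : y ^ 3 ≠ x ^ 3) (hyz : z ^ 3 ≠ y ^ 3) (hzx : x ^ 3 ≠ z ^ 3)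
    (hP3 : y = 0 → x ^ 3 ≠ -z ^ 3)
    (e0 : r * z = a * x) (e1 : r ^ 2 * y = a * y) (e2 : x = a * z) : False := by
  have hr0 : r ≠ 0 := fun h => by simp [h] at hr3
  by_cases hy : y = 0
  · have hx : x ≠ 0 := fun h => hxy (by rw [hy, h])
    have hz : z ≠ 0 := fun h => hyz (by rw [h, hy])
    have ha2 : a ^ 2 = r := by
      have key : x * z * (a ^ 2 - r) = 0 := by
        linear_combination (-x) * e0 - (a * x) * e2
      have := resolve (u := x * z) (w := a ^ 2 - r) key (mul_ne_zero hx hz)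
      linear_combination this
    have ha6 : (a ^ 3 - 1) * (a ^ 3 + 1) = 0 := by
      linear_combination (a ^ 4 + a ^ 2 * r + r ^ 2) * ha2 + hr3
    have hx3 : x ^ 3 = a ^ 3 * z ^ 3 := by
      linear_combination (x ^ 2 + a * z * x + a ^ 2 * z ^ 2) * e2
    rcases mul_eq_zero.1 ha6 with h | h
    · exact hzx (by rw [hx3, show a ^ 3 = 1 by linear_combination h, one_mul])
    · exact hP3 hy (by rw [hx3, show a ^ 3 = -1 by linear_combination h]; ring)
  · have haeq : a = r ^ 2 := by
      have := resolve (by linear_combination -e1 : y * (a - r ^ 2) = 0) hy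
      linear_combination this
    have ha3 : a ^ 3 = 1 := by
      rw [haeq]; linear_combination (r ^ 3 + 1) * hr3
    have hx3 : x ^ 3 = z ^ 3 := by
      linear_combination (x ^ 2 + a * z * x + a ^ 2 * z ^ 2) * e2 + z ^ 3 * ha3
    exact hzx hx3

lemma A6 (ha : a ≠ 0) (hr3 : r ^ 3 = 1)
    (hxy : y ^ 3 ≠ x ^ 3) (hyz : z ^ 3 ≠ y ^ 3) (hzx : x ^ 3 ≠ z ^ 3)
    (hP1 : z = 0 → y ^ 3 ≠ -x ^ 3)
    (e0 : r ^ 2 * y = a * x) (e1 : x = a * y) (e2 : r * z = a * z) : False := by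
  have hr0 : r ≠ 0 := fun h => by simp [h] at hr3
  by_cases hz : z = 0
  · have hx : x ≠ 0 := fun h => hzx (by rw [h, hz])
    have hy : y ≠ 0 := by
      intro h
      exact hx (by rw [e1, h]; ring)
    have ha2 : a ^ 2 = r ^ 2 := by
      have key : x * y * (a ^ 2 - r ^ 2) = 0 := by
        linear_combination (-x) * e0 - (a * x) * e1
      have := resolve (u := x * y) (w := a ^ 2 - r ^ 2) key (mul_ne_zero hx hy)
      linear_combination this
    have ha6 : (a ^ 3 - 1) * (a ^ 3 + 1) = 0 := by
      linear_combination (a ^ 4 + a ^ 2 * r ^ 2 + r ^ 4) * ha2 + (r ^ 3 + 1) * hr3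
    have hx3 : x ^ 3 = a ^ 3 * y ^ 3 := by
      linear_combination (x ^ 2 + a * y * x + a ^ 2 * y ^ 2) * e1
    rcases mul_eq_zero.1 ha6 with h | h
    · exact hxy (by rw [hx3, show a ^ 3 = 1 by linear_combination h, one_mul])
    · exact hP1 hz (by rw [hx3, show a ^ 3 = -1 by linear_combination h]; ring)
  · have haeq : a = r := by
      have := resolve (by linear_combination -e2 : z * (a - r) = 0) hz
      linear_combination this
    have ha3 : a ^ 3 = 1 := by rw [haeq, hr3]
    have hx3 : y ^ 3 = x ^ 3 := by
      linear_combination (-(x ^ 2 + a * y * x + a ^ 2 * y ^ 2)) * e1 - y ^ 3 * ha3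
    exact hxy hx3

end Algebra
lemma stab (v : Fin 3 → ℂ) (hv : v ≠ 0)
    (hxy : v 1 ^ 3 ≠ v 0 ^ 3) (hyz : v 2 ^ 3 ≠ v 1 ^ 3) (hzx : v 0 ^ 3 ≠ v 2 ^ 3)
    (hP1 : v 2 = 0 → v 1 ^ 3 ≠ -v 0 ^ 3) (hP2 : v 0 = 0 → v 2 ^ 3 ≠ -v 1 ^ 3)
    (hP3 : v 1 = 0 → v 0 ^ 3 ≠ -v 2 ^ 3)
    (B C D : ℕ) (hB : B < 3) (hC : C < 3) (hD : D < 2)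
    (h : qv v hv B C D = qv v hv 0 0 0) : B = 0 ∧ C = 0 ∧ D = 0 := by
  interval_cases D <;> interval_cases B <;> interval_cases C
  · exact ⟨rfl, rfl, rfl⟩
  · exfalso
    rw [qv_zero, qv, act_mk, Projectivization.mk_eq_mk_iff] at h
    obtain ⟨a, ha⟩ := h
    have e0 := congrFun ha 0
    have e1 := congrFun ha 1
    have e2 := congrFun ha 2
    simp only [glw_val, pow_succ, pow_zero, pow_one, Matrix.one_mul, Matrix.mul_one,
      ← Matrix.mulVec_mulVec, σ_mulVec, τ_mulVec, ι_mulVec, Pi.smul_apply, Units.smul_def, smul_eq_mul,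
      Matrix.cons_val_zero, Matrix.cons_val_one, Matrix.cons_val_two, Matrix.head_cons,
      Matrix.tail_cons] at e0 e1 e2
    exact A1 a.ne_zero hρ3 hρ1 hxy hyz hzx
      (by linear_combination -e0 : v 0 = (a:ℂ) * v 0)
      (by linear_combination -e1 : ρ * v 1 = (a:ℂ) * v 1)
      (by linear_combination -e2 : ρ^2 * v 2 = (a:ℂ) * v 2)
  · exfalso
    rw [qv_zero, qv, act_mk, Projectivization.mk_eq_mk_iff] at h
    obtain ⟨a, ha⟩ := h
    have e0 := congrFun ha 0
    have e1 := congrFun ha 1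
    have e2 := congrFun ha 2
    simp only [glw_val, pow_succ, pow_zero, pow_one, Matrix.one_mul, Matrix.mul_one,
      ← Matrix.mulVec_mulVec, σ_mulVec, τ_mulVec, ι_mulVec, Pi.smul_apply, Units.smul_def, smul_eq_mul,
      Matrix.cons_val_zero, Matrix.cons_val_one, Matrix.cons_val_two, Matrix.head_cons,
      Matrix.tail_cons] at e0 e1 e2
    exact A1 a.ne_zero (by linear_combination (ρ^3+1)*hρ3 : (ρ^2:ℂ)^3 = 1) hρ2ne1 hxy hyz hzx
      (by linear_combination -e0 : v 0 = (a:ℂ) * v 0)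
      (by linear_combination -e1 : (ρ^2) * v 1 = (a:ℂ) * v 1)
      (by linear_combination -e2 : (ρ^2)^2 * v 2 = (a:ℂ) * v 2)
  · exfalso
    rw [qv_zero, qv, act_mk, Projectivization.mk_eq_mk_iff] at h
    obtain ⟨a, ha⟩ := h
    have e0 := congrFun ha 0
    have e1 := congrFun ha 1
    have e2 := congrFun ha 2
    simp only [glw_val, pow_succ, pow_zero, pow_one, Matrix.one_mul, Matrix.mul_one,
      ← Matrix.mulVec_mulVec, σ_mulVec, τ_mulVec, ι_mulVec, Pi.smul_apply, Units.smul_def, smul_eq_mul,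
      Matrix.cons_val_zero, Matrix.cons_val_one, Matrix.cons_val_two, Matrix.head_cons,
      Matrix.tail_cons] at e0 e1 e2
    exact A2 a.ne_zero (one_pow 3 : (1:ℂ)^3 = 1) hxy hyz hzx 
      (by linear_combination -e0 : (1:ℂ) * v 1 = (a:ℂ) * v 0)
      (by linear_combination -e1 : (1:ℂ)^2 * v 2 = (a:ℂ) * v 1)
      (by linear_combination -e2 : v 0 = (a:ℂ) * v 2)
  · exfalso
    rw [qv_zero, qv, act_mk, Projectivization.mk_eq_mk_iff] at h
    obtain ⟨a, ha⟩ := h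
    have e0 := congrFun ha 0
    have e1 := congrFun ha 1
    have e2 := congrFun ha 2
    simp only [glw_val, pow_succ, pow_zero, pow_one, Matrix.one_mul, Matrix.mul_one,
      ← Matrix.mulVec_mulVec, σ_mulVec, τ_mulVec, ι_mulVec, Pi.smul_apply, Units.smul_def, smul_eq_mul,
      Matrix.cons_val_zero, Matrix.cons_val_one, Matrix.cons_val_two, Matrix.head_cons,
      Matrix.tail_cons] at e0 e1 e2
    exact A2 a.ne_zero hρ3 hxy hyz hzx 
      (by linear_combination -e0 : ρ * v 1 = (a:ℂ) * v 0)
      (by linear_combination -e1 : ρ^2 * v 2 = (a:ℂ) * v 1)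
      (by linear_combination -e2 : v 0 = (a:ℂ) * v 2)
  · exfalso
    rw [qv_zero, qv, act_mk, Projectivization.mk_eq_mk_iff] at h
    obtain ⟨a, ha⟩ := h
    have e0 := congrFun ha 0
    have e1 := congrFun ha 1
    have e2 := congrFun ha 2
    simp only [glw_val, pow_succ, pow_zero, pow_one, Matrix.one_mul, Matrix.mul_one,
      ← Matrix.mulVec_mulVec, σ_mulVec, τ_mulVec, ι_mulVec, Pi.smul_apply, Units.smul_def, smul_eq_mul,
      Matrix.cons_val_zero, Matrix.cons_val_one, Matrix.cons_val_two, Matrix.head_cons,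
      Matrix.tail_cons] at e0 e1 e2
    exact A2 a.ne_zero (by linear_combination (ρ^3+1)*hρ3 : (ρ^2:ℂ)^3 = 1) hxy hyz hzx 
      (by linear_combination -e0 : (ρ^2) * v 1 = (a:ℂ) * v 0)
      (by linear_combination -e1 : (ρ^2)^2 * v 2 = (a:ℂ) * v 1)
      (by linear_combination -e2 : v 0 = (a:ℂ) * v 2)
  · exfalso
    rw [qv_zero, qv, act_mk, Projectivization.mk_eq_mk_iff] at h
    obtain ⟨a, ha⟩ := h
    have e0 := congrFun ha 0
    have e1 := congrFun ha 1
    have e2 := congrFun ha 2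
    simp only [glw_val, pow_succ, pow_zero, pow_one, Matrix.one_mul, Matrix.mul_one,
      ← Matrix.mulVec_mulVec, σ_mulVec, τ_mulVec, ι_mulVec, Pi.smul_apply, Units.smul_def, smul_eq_mul,
      Matrix.cons_val_zero, Matrix.cons_val_one, Matrix.cons_val_two, Matrix.head_cons,
      Matrix.tail_cons] at e0 e1 e2
    exact A3 a.ne_zero (one_pow 3 : (1:ℂ)^3 = 1) hxy hyz hzx 
      (by linear_combination -e0 : (1:ℂ)^2 * v 2 = (a:ℂ) * v 0)
      (by linear_combination -e1 : v 0 = (a:ℂ) * v 1)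
      (by linear_combination -e2 : (1:ℂ) * v 1 = (a:ℂ) * v 2)
  · exfalso
    rw [qv_zero, qv, act_mk, Projectivization.mk_eq_mk_iff] at h
    obtain ⟨a, ha⟩ := h
    have e0 := congrFun ha 0
    have e1 := congrFun ha 1
    have e2 := congrFun ha 2
    simp only [glw_val, pow_succ, pow_zero, pow_one, Matrix.one_mul, Matrix.mul_one,
      ← Matrix.mulVec_mulVec, σ_mulVec, τ_mulVec, ι_mulVec, Pi.smul_apply, Units.smul_def, smul_eq_mul,
      Matrix.cons_val_zero, Matrix.cons_val_one, Matrix.cons_val_two, Matrix.head_cons,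
      Matrix.tail_cons] at e0 e1 e2
    exact A3 a.ne_zero hρ3 hxy hyz hzx 
      (by linear_combination -e0 : ρ^2 * v 2 = (a:ℂ) * v 0)
      (by linear_combination -e1 : v 0 = (a:ℂ) * v 1)
      (by linear_combination -e2 : ρ * v 1 = (a:ℂ) * v 2)
  · exfalso
    rw [qv_zero, qv, act_mk, Projectivization.mk_eq_mk_iff] at h
    obtain ⟨a, ha⟩ := h
    have e0 := congrFun ha 0
    have e1 := congrFun ha 1
    have e2 := congrFun ha 2
    simp only [glw_val, pow_succ, pow_zero, pow_one, Matrix.one_mul, Matrix.mul_one,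
      ← Matrix.mulVec_mulVec, σ_mulVec, τ_mulVec, ι_mulVec, Pi.smul_apply, Units.smul_def, smul_eq_mul,
      Matrix.cons_val_zero, Matrix.cons_val_one, Matrix.cons_val_two, Matrix.head_cons,
      Matrix.tail_cons] at e0 e1 e2
    exact A3 a.ne_zero (by linear_combination (ρ^3+1)*hρ3 : (ρ^2:ℂ)^3 = 1) hxy hyz hzx 
      (by linear_combination -e0 : (ρ^2)^2 * v 2 = (a:ℂ) * v 0)
      (by linear_combination -e1 : v 0 = (a:ℂ) * v 1)
      (by linear_combination -e2 : (ρ^2) * v 1 = (a:ℂ) * v 2)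
  · exfalso
    rw [qv_zero, qv, act_mk, Projectivization.mk_eq_mk_iff] at h
    obtain ⟨a, ha⟩ := h
    have e0 := congrFun ha 0
    have e1 := congrFun ha 1
    have e2 := congrFun ha 2
    simp only [glw_val, pow_succ, pow_zero, pow_one, Matrix.one_mul, Matrix.mul_one,
      ← Matrix.mulVec_mulVec, σ_mulVec, τ_mulVec, ι_mulVec, Pi.smul_apply, Units.smul_def, smul_eq_mul,
      Matrix.cons_val_zero, Matrix.cons_val_one, Matrix.cons_val_two, Matrix.head_cons,
      Matrix.tail_cons] at e0 e1 e2
    exact A4 a.ne_zero (one_pow 3 : (1:ℂ)^3 = 1) hxy hyz hzx hP2 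
      (by linear_combination -e0 : v 0 = (a:ℂ) * v 0)
      (by linear_combination -e1 : (1:ℂ) * v 2 = (a:ℂ) * v 1)
      (by linear_combination -e2 : (1:ℂ)^2 * v 1 = (a:ℂ) * v 2)
  · exfalso
    rw [qv_zero, qv, act_mk, Projectivization.mk_eq_mk_iff] at h
    obtain ⟨a, ha⟩ := h
    have e0 := congrFun ha 0
    have e1 := congrFun ha 1
    have e2 := congrFun ha 2
    simp only [glw_val, pow_succ, pow_zero, pow_one, Matrix.one_mul, Matrix.mul_one,
      ← Matrix.mulVec_mulVec, σ_mulVec, τ_mulVec, ι_mulVec, Pi.smul_apply, Units.smul_def, smul_eq_mul,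
      Matrix.cons_val_zero, Matrix.cons_val_one, Matrix.cons_val_two, Matrix.head_cons,
      Matrix.tail_cons] at e0 e1 e2
    exact A4 a.ne_zero hρ3 hxy hyz hzx hP2 
      (by linear_combination -e0 : v 0 = (a:ℂ) * v 0)
      (by linear_combination -e1 : ρ * v 2 = (a:ℂ) * v 1)
      (by linear_combination -e2 : ρ^2 * v 1 = (a:ℂ) * v 2)
  · exfalso
    rw [qv_zero, qv, act_mk, Projectivization.mk_eq_mk_iff] at h
    obtain ⟨a, ha⟩ := h
    have e0 := congrFun ha 0
    have e1 := congrFun ha 1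
    have e2 := congrFun ha 2
    simp only [glw_val, pow_succ, pow_zero, pow_one, Matrix.one_mul, Matrix.mul_one,
      ← Matrix.mulVec_mulVec, σ_mulVec, τ_mulVec, ι_mulVec, Pi.smul_apply, Units.smul_def, smul_eq_mul,
      Matrix.cons_val_zero, Matrix.cons_val_one, Matrix.cons_val_two, Matrix.head_cons,
      Matrix.tail_cons] at e0 e1 e2
    exact A4 a.ne_zero (by linear_combination (ρ^3+1)*hρ3 : (ρ^2:ℂ)^3 = 1) hxy hyz hzx hP2 
      (by linear_combination -e0 : v 0 = (a:ℂ) * v 0)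
      (by linear_combination -e1 : (ρ^2) * v 2 = (a:ℂ) * v 1)
      (by linear_combination -e2 : (ρ^2)^2 * v 1 = (a:ℂ) * v 2)
  · exfalso
    rw [qv_zero, qv, act_mk, Projectivization.mk_eq_mk_iff] at h
    obtain ⟨a, ha⟩ := h
    have e0 := congrFun ha 0
    have e1 := congrFun ha 1
    have e2 := congrFun ha 2
    simp only [glw_val, pow_succ, pow_zero, pow_one, Matrix.one_mul, Matrix.mul_one,
      ← Matrix.mulVec_mulVec, σ_mulVec, τ_mulVec, ι_mulVec, Pi.smul_apply, Units.smul_def, smul_eq_mul,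
      Matrix.cons_val_zero, Matrix.cons_val_one, Matrix.cons_val_two, Matrix.head_cons,
      Matrix.tail_cons] at e0 e1 e2
    exact A5 a.ne_zero (one_pow 3 : (1:ℂ)^3 = 1) hxy hyz hzx hP3 
      (by linear_combination -e0 : (1:ℂ) * v 2 = (a:ℂ) * v 0)
      (by linear_combination -e1 : (1:ℂ)^2 * v 1 = (a:ℂ) * v 1)
      (by linear_combination -e2 : v 0 = (a:ℂ) * v 2)
  · exfalso
    rw [qv_zero, qv, act_mk, Projectivization.mk_eq_mk_iff] at h
    obtain ⟨a, ha⟩ := h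
    have e0 := congrFun ha 0
    have e1 := congrFun ha 1
    have e2 := congrFun ha 2
    simp only [glw_val, pow_succ, pow_zero, pow_one, Matrix.one_mul, Matrix.mul_one,
      ← Matrix.mulVec_mulVec, σ_mulVec, τ_mulVec, ι_mulVec, Pi.smul_apply, Units.smul_def, smul_eq_mul,
      Matrix.cons_val_zero, Matrix.cons_val_one, Matrix.cons_val_two, Matrix.head_cons,
      Matrix.tail_cons] at e0 e1 e2
    exact A5 a.ne_zero hρ3 hxy hyz hzx hP3 
      (by linear_combination -e0 : ρ * v 2 = (a:ℂ) * v 0)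
      (by linear_combination -e1 : ρ^2 * v 1 = (a:ℂ) * v 1)
      (by linear_combination -e2 : v 0 = (a:ℂ) * v 2)
  · exfalso
    rw [qv_zero, qv, act_mk, Projectivization.mk_eq_mk_iff] at h
    obtain ⟨a, ha⟩ := h
    have e0 := congrFun ha 0
    have e1 := congrFun ha 1
    have e2 := congrFun ha 2
    simp only [glw_val, pow_succ, pow_zero, pow_one, Matrix.one_mul, Matrix.mul_one,
      ← Matrix.mulVec_mulVec, σ_mulVec, τ_mulVec, ι_mulVec, Pi.smul_apply, Units.smul_def, smul_eq_mul,
      Matrix.cons_val_zero, Matrix.cons_val_one, Matrix.cons_val_two, Matrix.head_cons,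
      Matrix.tail_cons] at e0 e1 e2
    exact A5 a.ne_zero (by linear_combination (ρ^3+1)*hρ3 : (ρ^2:ℂ)^3 = 1) hxy hyz hzx hP3 
      (by linear_combination -e0 : (ρ^2) * v 2 = (a:ℂ) * v 0)
      (by linear_combination -e1 : (ρ^2)^2 * v 1 = (a:ℂ) * v 1)
      (by linear_combination -e2 : v 0 = (a:ℂ) * v 2)
  · exfalso
    rw [qv_zero, qv, act_mk, Projectivization.mk_eq_mk_iff] at h
    obtain ⟨a, ha⟩ := h
    have e0 := congrFun ha 0
    have e1 := congrFun ha 1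
    have e2 := congrFun ha 2
    simp only [glw_val, pow_succ, pow_zero, pow_one, Matrix.one_mul, Matrix.mul_one,
      ← Matrix.mulVec_mulVec, σ_mulVec, τ_mulVec, ι_mulVec, Pi.smul_apply, Units.smul_def, smul_eq_mul,
      Matrix.cons_val_zero, Matrix.cons_val_one, Matrix.cons_val_two, Matrix.head_cons,
      Matrix.tail_cons] at e0 e1 e2
    exact A6 a.ne_zero (one_pow 3 : (1:ℂ)^3 = 1) hxy hyz hzx hP1 
      (by linear_combination -e0 : (1:ℂ)^2 * v 1 = (a:ℂ) * v 0)
      (by linear_combination -e1 : v 0 = (a:ℂ) * v 1)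
      (by linear_combination -e2 : (1:ℂ) * v 2 = (a:ℂ) * v 2)
  · exfalso
    rw [qv_zero, qv, act_mk, Projectivization.mk_eq_mk_iff] at h
    obtain ⟨a, ha⟩ := h
    have e0 := congrFun ha 0
    have e1 := congrFun ha 1
    have e2 := congrFun ha 2
    simp only [glw_val, pow_succ, pow_zero, pow_one, Matrix.one_mul, Matrix.mul_one,
      ← Matrix.mulVec_mulVec, σ_mulVec, τ_mulVec, ι_mulVec, Pi.smul_apply, Units.smul_def, smul_eq_mul,
      Matrix.cons_val_zero, Matrix.cons_val_one, Matrix.cons_val_two, Matrix.head_cons,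
      Matrix.tail_cons] at e0 e1 e2
    exact A6 a.ne_zero hρ3 hxy hyz hzx hP1 
      (by linear_combination -e0 : ρ^2 * v 1 = (a:ℂ) * v 0)
      (by linear_combination -e1 : v 0 = (a:ℂ) * v 1)
      (by linear_combination -e2 : ρ * v 2 = (a:ℂ) * v 2)
  · exfalso
    rw [qv_zero, qv, act_mk, Projectivization.mk_eq_mk_iff] at h
    obtain ⟨a, ha⟩ := h
    have e0 := congrFun ha 0
    have e1 := congrFun ha 1
    have e2 := congrFun ha 2
    simp only [glw_val, pow_succ, pow_zero, pow_one, Matrix.one_mul, Matrix.mul_one,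
      ← Matrix.mulVec_mulVec, σ_mulVec, τ_mulVec, ι_mulVec, Pi.smul_apply, Units.smul_def, smul_eq_mul,
      Matrix.cons_val_zero, Matrix.cons_val_one, Matrix.cons_val_two, Matrix.head_cons,
      Matrix.tail_cons] at e0 e1 e2
    exact A6 a.ne_zero (by linear_combination (ρ^3+1)*hρ3 : (ρ^2:ℂ)^3 = 1) hxy hyz hzx hP1 
      (by linear_combination -e0 : (ρ^2)^2 * v 1 = (a:ℂ) * v 0)
      (by linear_combination -e1 : v 0 = (a:ℂ) * v 1)
      (by linear_combination -e2 : (ρ^2) * v 2 = (a:ℂ) * v 2)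
lemma stab' (v : Fin 3 → ℂ) (hv : v ≠ 0)
    (hxy : v 1 ^ 3 ≠ v 0 ^ 3) (hyz : v 2 ^ 3 ≠ v 1 ^ 3) (hzx : v 0 ^ 3 ≠ v 2 ^ 3)
    (hP1 : v 2 = 0 → v 1 ^ 3 ≠ -v 0 ^ 3) (hP2 : v 0 = 0 → v 2 ^ 3 ≠ -v 1 ^ 3)
    (hP3 : v 1 = 0 → v 0 ^ 3 ≠ -v 2 ^ 3)
    (B C D : ℕ) (h : qv v hv B C D = qv v hv 0 0 0) : B % 3 = 0 ∧ C % 3 = 0 ∧ D % 2 = 0 :=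
  stab v hv hxy hyz hzx hP1 hP2 hP3 (B % 3) (C % 3) (D % 2)
    (Nat.mod_lt _ (by norm_num)) (Nat.mod_lt _ (by norm_num)) (Nat.mod_lt _ (by norm_num))
    ((qv_mod v hv B C D).symm.trans h)

lemma qv_inj (v : Fin 3 → ℂ) (hv : v ≠ 0)
    (hxy : v 1 ^ 3 ≠ v 0 ^ 3) (hyz : v 2 ^ 3 ≠ v 1 ^ 3) (hzx : v 0 ^ 3 ≠ v 2 ^ 3)
    (hP1 : v 2 = 0 → v 1 ^ 3 ≠ -v 0 ^ 3) (hP2 : v 0 = 0 → v 2 ^ 3 ≠ -v 1 ^ 3)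
    (hP3 : v 1 = 0 → v 0 ^ 3 ≠ -v 2 ^ 3)
    (b c d b' c' d' : ℕ) (hb : b < 3) (hc : c < 3) (hd : d < 2)
    (hb' : b' < 3) (hc' : c' < 3) (hd' : d' < 2)
    (h : qv v hv b c d = qv v hv b' c' d') : b = b' ∧ c = c' ∧ d = d' := by
  interval_cases d
  · -- d = 0
    have h2 := congrArg (act (σgl ^ (3 - b))) (congrArg (act (τgl ^ (3 - c))) h)
    rw [Lτn, Lτn, Lσn, Lσn] at h2
    rw [show b + (3 - b) = 3 by omega, show c + (3 - c) = 3 by omega] at h2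
    have e330 : qv v hv 3 3 0 = qv v hv 0 0 0 := by rw [qv_mod]; try norm_num
    rw [e330] at h2
    have h3 := stab' v hv hxy hyz hzx hP1 hP2 hP3 _ _ _ h2.symm
    omega
  · -- d = 1
    have h1 := congrArg (act ιgl) h
    rw [Lι, Lι] at h1
    have h2 := congrArg (act (σgl ^ (6 - 2 * b))) (congrArg (act (τgl ^ (6 - 2 * c))) h1)
    rw [Lτn, Lτn, Lσn, Lσn] at h2
    rw [show 2 * b + (6 - 2 * b) = 6 by omega, show 2 * c + (6 - 2 * c) = 6 by omega] at h2
    have e660 : qv v hv 6 6 (1 + 1) = qv v hv 0 0 0 := by rw [qv_mod]; try norm_num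
    rw [e660] at h2
    have h3 := stab' v hv hxy hyz hzx hP1 hP2 hP3 _ _ _ h2.symm
    omega

lemma σgl_inv : σgl⁻¹ = σgl ^ 2 := by
  apply inv_eq_of_mul_eq_one_right
  rw [← pow_succ']
  exact σgl3

lemma τgl_inv : τgl⁻¹ = τgl ^ 2 := by
  apply inv_eq_of_mul_eq_one_right
  rw [← pow_succ']
  exact τgl3

lemma ιgl_inv : ιgl⁻¹ = ιgl := by
  apply inv_eq_of_mul_eq_one_right
  rw [← pow_two]
  exact ιgl2

lemma orbit_index (v : Fin 3 → ℂ) (hv : v ≠ 0) (M : GL (Fin 3) ℂ) (hM : M ∈ Hgrp) :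
    (∀ b c d : ℕ, ∃ b' c' d' : ℕ, act M (qv v hv b c d) = qv v hv b' c' d') ∧
    (∀ b c d : ℕ, ∃ b' c' d' : ℕ, act M⁻¹ (qv v hv b c d) = qv v hv b' c' d') := by
  induction hM using Subgroup.closure_induction with
  | mem g hg =>
    simp only [Set.mem_insert_iff, Set.mem_singleton_iff] at hg
    rcases hg with rfl | rfl | rfl
    · exact ⟨fun b c d => ⟨b + 1, c, d, Lσ v hv b c d⟩,
        fun b c d => ⟨b + 2, c, d, by rw [σgl_inv, Lσn]⟩⟩
    · exact ⟨fun b c d => ⟨b, c + 1, d, Lτ v hv b c d⟩,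
        fun b c d => ⟨b, c + 2, d, by rw [τgl_inv, Lτn]⟩⟩
    · exact ⟨fun b c d => ⟨2 * b, 2 * c, d + 1, Lι v hv b c d⟩,
        fun b c d => ⟨2 * b, 2 * c, d + 1, by rw [ιgl_inv, Lι]⟩⟩
  | one =>
    exact ⟨fun b c d => ⟨b, c, d, by rw [act_one]⟩,
      fun b c d => ⟨b, c, d, by rw [inv_one, act_one]⟩⟩
  | mul g h hg hh ihg ihh =>
    constructor
    · intro b c d
      obtain ⟨b1, c1, d1, h1⟩ := ihh.1 b c d
      obtain ⟨b2, c2, d2, h2⟩ := ihg.1 b1 c1 d1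
      exact ⟨b2, c2, d2, by rw [act_mul, h1, h2]⟩
    · intro b c d
      obtain ⟨b1, c1, d1, h1⟩ := ihg.2 b c d
      obtain ⟨b2, c2, d2, h2⟩ := ihh.2 b1 c1 d1
      exact ⟨b2, c2, d2, by rw [_root_.mul_inv_rev, act_mul, h1, h2]⟩
  | inv g hg ihg =>
    exact ⟨ihg.2, by simpa [inv_inv] using ihg.1⟩

lemma glw_mem (b c d : ℕ) : glw b c d ∈ Hgrp := by
  apply mul_mem
  apply mul_mem
  · exact pow_mem (Subgroup.subset_closure (by simp [Set.mem_insert_iff])) _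
  · exact pow_mem (Subgroup.subset_closure (by simp [Set.mem_insert_iff])) _
  · exact pow_mem (Subgroup.subset_closure (by simp [Set.mem_insert_iff])) _
lemma vec_eq_zero (v : Fin 3 → ℂ) (h0 : v 0 = 0) (h1 : v 1 = 0) (h2 : v 2 = 0) : v = 0 := by
  funext j
  fin_cases j
  · simpa using h0
  · simpa using h1
  · simpa using h2

/-- If a point of `ℙ²(ℂ)` lies on none of the nine lines and is not one of the nine points
`y_{ji}`, then its `G`-orbit has exactly 18 elements. -/
theorem orbit_card_eighteen (p : ℙ ℂ (Fin 3 → ℂ))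
    (h₁ : ∀ l ∈ nineLines, p ∉ l) (h₂ : p ∉ ninePoints) :
    (Horbit p).ncard = 18 := by
  induction p using Projectivization.ind with
  | h v hv =>
  have hL1 : ∀ i : Fin 3, v 1 ≠ ρ ^ (i : ℕ) * v 0 :=
    fun i hh => h₁ (line₁ i) ⟨i, Or.inl rfl⟩ ⟨v, hv, rfl, hh⟩
  have hL2 : ∀ i : Fin 3, v 2 ≠ ρ ^ (i : ℕ) * v 1 :=
    fun i hh => h₁ (line₂ i) ⟨i, Or.inr (Or.inl rfl)⟩ ⟨v, hv, rfl, hh⟩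
  have hL3 : ∀ i : Fin 3, v 0 ≠ ρ ^ (i : ℕ) * v 2 :=
    fun i hh => h₁ (line₃ i) ⟨i, Or.inr (Or.inr rfl)⟩ ⟨v, hv, rfl, hh⟩
  have hxy : v 1 ^ 3 ≠ v 0 ^ 3 := fun hh => by
    obtain ⟨i, hi⟩ := cube_eq hh; exact hL1 i hi
  have hyz : v 2 ^ 3 ≠ v 1 ^ 3 := fun hh => by
    obtain ⟨i, hi⟩ := cube_eq hh; exact hL2 i hi
  have hzx : v 0 ^ 3 ≠ v 2 ^ 3 := fun hh => by
    obtain ⟨i, hi⟩ := cube_eq hh; exact hL3 i hi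
  have hP1 : v 2 = 0 → v 1 ^ 3 ≠ -v 0 ^ 3 := by
    intro hz hcube
    have hcube' : v 1 ^ 3 = (-v 0) ^ 3 := by linear_combination hcube
    obtain ⟨i, hi⟩ := cube_eq hcube'
    have hx0 : v 0 ≠ 0 := by
      intro h0
      exact hv (vec_eq_zero v h0 (by rw [hi, h0]; ring) hz)
    apply h₂
    refine ⟨i, Or.inl ?_⟩
    simp only [ypt₁, pt]
    rw [Projectivization.mk_eq_mk_iff]
    refine ⟨Units.mk0 (v 0) hx0, ?_⟩
    funext j; fin_cases j <;>
      simp [Units.smul_def, smul_eq_mul, hi, hz] <;> ring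
  have hP2 : v 0 = 0 → v 2 ^ 3 ≠ -v 1 ^ 3 := by
    intro hx hcube
    have hcube' : v 2 ^ 3 = (-v 1) ^ 3 := by linear_combination hcube
    obtain ⟨i, hi⟩ := cube_eq hcube'
    have hy0 : v 1 ≠ 0 := by
      intro h0
      exact hv (vec_eq_zero v hx h0 (by rw [hi, h0]; ring))
    apply h₂
    refine ⟨i, Or.inr (Or.inl ?_)⟩
    simp only [ypt₂, pt]
    rw [Projectivization.mk_eq_mk_iff]
    refine ⟨Units.mk0 (v 1) hy0, ?_⟩
    funext j; fin_cases j <;>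
      simp [Units.smul_def, smul_eq_mul, hi, hx] <;> ring
  have hP3 : v 1 = 0 → v 0 ^ 3 ≠ -v 2 ^ 3 := by
    intro hy hcube
    have hcube' : v 0 ^ 3 = (-v 2) ^ 3 := by linear_combination hcube
    obtain ⟨i, hi⟩ := cube_eq hcube'
    have hz0 : v 2 ≠ 0 := by
      intro h0
      exact hv (vec_eq_zero v (by rw [hi, h0]; ring) hy h0)
    apply h₂
    refine ⟨i, Or.inr (Or.inr ?_)⟩
    simp only [ypt₃, pt]
    rw [Projectivization.mk_eq_mk_iff]
    refine ⟨Units.mk0 (v 2) hz0, ?_⟩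
    funext j; fin_cases j <;>
      simp [Units.smul_def, smul_eq_mul, hi, hy] <;> ring
  have horb : Horbit (Projectivization.mk ℂ v hv)
      = Set.range (fun t : Fin 3 × Fin 3 × Fin 2 =>
          qv v hv (t.1 : ℕ) (t.2.1 : ℕ) (t.2.2 : ℕ)) := by
    apply Set.eq_of_subset_of_subset
    · rintro q ⟨M, hM, rfl⟩
      obtain ⟨b', c', d', hq⟩ := (orbit_index v hv M hM).1 0 0 0
      rw [qv_zero] at hq
      rw [hq, qv_mod]
      exact ⟨(⟨b' % 3, by omega⟩, ⟨c' % 3, by omega⟩, ⟨d' % 2, by omega⟩), rfl⟩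
    · rintro q ⟨⟨b, c, d⟩, rfl⟩
      exact ⟨glw b.val c.val d.val, glw_mem _ _ _, rfl⟩
  rw [horb, ← Set.image_univ, Set.ncard_image_of_injective _ ?_, Set.ncard_univ]
  · simp [Nat.card_eq_fintype_card]
  · rintro ⟨b, c, d⟩ ⟨b', c', d'⟩ hq
    simp only at hq
    obtain ⟨e1, e2, e3⟩ := qv_inj v hv hxy hyz hzx hP1 hP2 hP3
      b.val c.val d.val b'.val c'.val d'.val b.isLt c.isLt d.isLt b'.isLt c'.isLt d'.isLt hq
    simp only [Prod.mk.injEq]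
    exact ⟨Fin.ext e1, Fin.ext e2, Fin.ext e3⟩

end
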